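/- For the path graph P_n with n ≥ 2 vertices and adjacency matrix A, if perfect state transfer occurs between the end vertices (i.e., |⟨n| exp(-itA) |1⟩| = 1 for some t > 0), then the ratio (λ_j - λ_l)/(λ_j' - λ_l') is rational for all eigenvalues λ_j, λ_l, λ_j', λ_l' of A with λ_j' ≠ λ_l', where all eigenvalues have nonzero overlap with both end vertices. -/

import Mathlib

open Matrix

/-- Adjacency matrix of the path graph `P_n` on vertices `0, …, n-1`. -/
def pathAdj (n : ℕ) : Matrix (Fin n) (Fin n) ℂ :=
  Matrix.of fun i j => if (i : ℕ) + 1 = j ∨ (j : ℕ) + 1 = i then 1 else 0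

lemma exp_mulVec_eig {N : ℕ} (M : Matrix (Fin N) (Fin N) ℂ) (v : Fin N → ℂ) (c : ℂ)
    (h : M.mulVec v = c • v) :
    (NormedSpace.exp M).mulVec v = Complex.exp c • v := by
  letI : SeminormedRing (Matrix (Fin N) (Fin N) ℂ) := Matrix.linftyOpSemiNormedRing
  letI : NormedRing (Matrix (Fin N) (Fin N) ℂ) := Matrix.linftyOpNormedRing
  letI : NormedAlgebra ℂ (Matrix (Fin N) (Fin N) ℂ) := Matrix.linftyOpNormedAlgebra
  have hpow : ∀ k : ℕ, (M ^ k).mulVec v = (c ^ k) • v := by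
    intro k
    induction k with
    | zero => simp
    | succ k ih =>
      rw [pow_succ, ← Matrix.mulVec_mulVec, h, Matrix.mulVec_smul, ih, smul_smul, pow_succ]
      ring_nf
  let L : Matrix (Fin N) (Fin N) ℂ →ₗ[ℂ] (Fin N → ℂ) :=
    { toFun := fun A => A.mulVec v
      map_add' := fun A B => Matrix.add_mulVec A B v
      map_smul' := fun a A => Matrix.smul_mulVec a A v }
  have hsum : Summable (fun k : ℕ => ((k).factorial : ℂ)⁻¹ • M ^ k) :=
    NormedSpace.expSeries_summable' M
  have hsumc : Summable (fun k : ℕ => ((k).factorial : ℂ)⁻¹ • c ^ k) :=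
    NormedSpace.expSeries_summable' c
  calc (NormedSpace.exp M).mulVec v
      = L.toContinuousLinearMap (∑' k : ℕ, ((k).factorial : ℂ)⁻¹ • M ^ k) := by
        rw [NormedSpace.exp_eq_tsum ℂ]; rfl
    _ = ∑' k : ℕ, L.toContinuousLinearMap (((k).factorial : ℂ)⁻¹ • M ^ k) :=
        L.toContinuousLinearMap.map_tsum hsum
    _ = ∑' k : ℕ, (((k).factorial : ℂ)⁻¹ • c ^ k) • v := by
        refine tsum_congr fun k => ?_
        show ((((k).factorial : ℂ)⁻¹ • M ^ k)).mulVec v = _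
        rw [Matrix.smul_mulVec, hpow, smul_smul, smul_eq_mul]
    _ = (∑' k : ℕ, ((k).factorial : ℂ)⁻¹ • c ^ k) • v := by
        rw [Summable.tsum_smul_const hsumc]
    _ = Complex.exp c • v := by
        rw [Complex.exp_eq_exp_ℂ, NormedSpace.exp_eq_tsum (𝕂 := ℂ) (𝔸 := ℂ)]

lemma pathAdj_symm (n : ℕ) : (pathAdj n).IsSymm := by
  ext i j
  simp only [pathAdj, Matrix.transpose_apply, Matrix.of_apply]
  exact if_congr or_comm rfl rfl

lemma pathAdj_conjTranspose (n : ℕ) : (pathAdj n)ᴴ = pathAdj n := by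
  ext i j
  simp only [pathAdj, Matrix.conjTranspose_apply, Matrix.of_apply]
  split_ifs with h1 h2 <;> simp_all

lemma mulVec_pathAdj {n : ℕ} (v : Fin n → ℂ) (k : Fin n) :
    (pathAdj n).mulVec v k =
      (if h : (k:ℕ)+1 < n then v ⟨(k:ℕ)+1, h⟩ else 0) +
      (if h : 0 < (k:ℕ) then v ⟨(k:ℕ)-1, by omega⟩ else 0) := by
  have step : ∀ j : Fin n, pathAdj n k j * v j =
      (if ((k:ℕ)+1 = (j:ℕ)) then v j else 0) + (if ((j:ℕ)+1 = (k:ℕ)) then v j else 0) := by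
    intro j
    simp only [pathAdj, Matrix.of_apply]
    by_cases h2 : (k:ℕ)+1 = (j:ℕ)
    · have h3 : ¬((j:ℕ)+1 = (k:ℕ)) := by omega
      simp [h2, h3]
    · by_cases h3 : (j:ℕ)+1 = (k:ℕ) <;> simp [h2, h3]
  rw [Matrix.mulVec, dotProduct]
  simp_rw [step]
  rw [Finset.sum_add_distrib]
  congr 1
  · by_cases h : (k:ℕ)+1 < n
    · rw [dif_pos h, Finset.sum_eq_single (⟨(k:ℕ)+1, h⟩ : Fin n)]
      · simp
      · intro j _ hj
        rw [if_neg]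
        intro hc
        exact hj (by apply Fin.ext; simp only [Fin.val_mk]; omega)
      · simp
    · rw [dif_neg h]
      apply Finset.sum_eq_zero
      intro j _
      rw [if_neg]
      have := j.isLt
      omega
  · by_cases h : 0 < (k:ℕ)
    · rw [dif_pos h, Finset.sum_eq_single (⟨(k:ℕ)-1, by omega⟩ : Fin n)]
      · rw [if_pos (by simp only [Fin.val_mk]; omega)]
      · intro j _ hj
        rw [if_neg]
        intro hc
        exact hj (by apply Fin.ext; simp only [Fin.val_mk]; omega)
      · simp
    · rw [dif_neg h]
      apply Finset.sum_eq_zero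
      intro j _
      rw [if_neg]
      omega

lemma path_eigvec_real {n : ℕ} (hn : 2 ≤ n) (lam : ℝ) (v : Fin n → ℂ)
    (hv : (pathAdj n).mulVec v = (lam : ℂ) • v) :
    ∀ m : ℕ, ∀ h : m < n, ∃ r : ℝ, v ⟨m, h⟩ = (r : ℂ) * v ⟨0, by omega⟩ := by
  intro m
  induction m using Nat.strong_induction_on with
  | _ m ih =>
    intro h
    match m, h with
    | 0, h => exact ⟨1, by simp⟩
    | 1, h =>
      have h0 := congrFun hv ⟨0, by omega⟩
      rw [mulVec_pathAdj] at h0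
      simp only [Fin.val_mk, Pi.smul_apply, smul_eq_mul] at h0
      rw [dif_pos (by omega : (0:ℕ)+1 < n), dif_neg (by omega)] at h0
      exact ⟨lam, by rw [add_zero] at h0; exact h0⟩
    | (m+2), h =>
      obtain ⟨r1, hr1⟩ := ih (m+1) (by omega) (by omega)
      obtain ⟨r0, hr0⟩ := ih m (by omega) (by omega)
      have h0 := congrFun hv ⟨m+1, by omega⟩
      rw [mulVec_pathAdj] at h0
      simp only [Fin.val_mk, Pi.smul_apply, smul_eq_mul] at h0
      rw [dif_pos (by omega : (m+1)+1 < n), dif_pos (by omega : 0 < m+1)] at h0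
      simp only [Nat.add_sub_cancel] at h0
      refine ⟨lam * r1 - r0, ?_⟩
      push_cast
      linear_combination h0 - hr0 + (lam:ℂ) * hr1

/-- If the path graph `P_n` (`n ≥ 2`) admits perfect state transfer between its end
vertices, then the ratio of differences of eigenvalues (whose eigenvectors have nonzero
overlap with both end vertices) is rational. -/
theorem path_pst_eigenvalue_ratio_rational (n : ℕ) (hn : 2 ≤ n)
    (hPST : ∃ t : ℝ, 0 < t ∧
      ‖(NormedSpace.exp ((-(Complex.I * t)) • pathAdj n))
        ⟨n - 1, by omega⟩ ⟨0, by omega⟩‖ = 1)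
    (lam₁ lam₂ lam₃ lam₄ : ℝ)
    (h₁ : ∃ v : Fin n → ℂ, v ≠ 0 ∧ (pathAdj n).mulVec v = (lam₁ : ℂ) • v ∧
      v ⟨0, by omega⟩ ≠ 0 ∧ v ⟨n - 1, by omega⟩ ≠ 0)
    (h₂ : ∃ v : Fin n → ℂ, v ≠ 0 ∧ (pathAdj n).mulVec v = (lam₂ : ℂ) • v ∧
      v ⟨0, by omega⟩ ≠ 0 ∧ v ⟨n - 1, by omega⟩ ≠ 0)
    (h₃ : ∃ v : Fin n → ℂ, v ≠ 0 ∧ (pathAdj n).mulVec v = (lam₃ : ℂ) • v ∧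
      v ⟨0, by omega⟩ ≠ 0 ∧ v ⟨n - 1, by omega⟩ ≠ 0)
    (h₄ : ∃ v : Fin n → ℂ, v ≠ 0 ∧ (pathAdj n).mulVec v = (lam₄ : ℂ) • v ∧
      v ⟨0, by omega⟩ ≠ 0 ∧ v ⟨n - 1, by omega⟩ ≠ 0)
    (hne : lam₃ ≠ lam₄) :
    ∃ q : ℚ, (lam₁ - lam₂) / (lam₃ - lam₄) = (q : ℝ) := by
  obtain ⟨t, ht, habs⟩ := hPST
  set i0 : Fin n := ⟨0, by omega⟩ with hi0
  set i1 : Fin n := ⟨n - 1, by omega⟩ with hi1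
  set M : Matrix (Fin n) (Fin n) ℂ := (-(Complex.I * t)) • pathAdj n with hM
  set E : Matrix (Fin n) (Fin n) ℂ := NormedSpace.exp M with hEdef
  -- E is "unitary"
  have hMH : Mᴴ = -M := by
    rw [hM, Matrix.conjTranspose_smul, pathAdj_conjTranspose, ← neg_smul]
    congr 1
    rw [star_neg, star_mul']
    simp only [Complex.star_def, Complex.conj_I, Complex.conj_ofReal]
    ring
  have hEH : Eᴴ * E = 1 := by
    have h1 : Eᴴ = NormedSpace.exp (-M) := by
      rw [hEdef, ← Matrix.exp_conjTranspose M, hMH]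
    rw [h1, hEdef, ← Matrix.exp_add_of_commute (-M) M ((Commute.refl M).neg_left),
      neg_add_cancel]
    letI : SeminormedRing (Matrix (Fin n) (Fin n) ℂ) := Matrix.linftyOpSemiNormedRing
    letI : NormedRing (Matrix (Fin n) (Fin n) ℂ) := Matrix.linftyOpNormedRing
    letI : NormedAlgebra ℂ (Matrix (Fin n) (Fin n) ℂ) := Matrix.linftyOpNormedAlgebra
    exact NormedSpace.exp_zero
  -- the 0-column of E is concentrated at i1
  have hsum1 : ∑ k : Fin n, Complex.normSq (E k i0) = 1 := by
    have h1 : (Eᴴ * E) i0 i0 = 1 := by rw [hEH]; simp [Matrix.one_apply]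
    rw [Matrix.mul_apply] at h1
    simp_rw [Matrix.conjTranspose_apply, Complex.star_def,
      ← Complex.normSq_eq_conj_mul_self] at h1
    exact_mod_cast h1
  have hn1 : Complex.normSq (E i1 i0) = 1 := by
    rw [← Complex.sq_norm, habs, one_pow]
  have hcol : ∀ k : Fin n, k ≠ i1 → E k i0 = 0 := by
    have hzero : ∑ k ∈ Finset.univ.erase i1, Complex.normSq (E k i0) = 0 := by
      have h2 := Finset.sum_erase_add Finset.univ
        (fun k => Complex.normSq (E k i0)) (Finset.mem_univ i1)
      beta_reduce at h2
      rw [hsum1, hn1] at h2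
      linarith
    intro k hk
    have h3 := (Finset.sum_eq_zero_iff_of_nonneg
      (fun j _ => Complex.normSq_nonneg (E j i0))).mp hzero k
      (Finset.mem_erase.2 ⟨hk, Finset.mem_univ k⟩)
    exact Complex.normSq_eq_zero.mp h3
  -- key phase relation for each eigenvalue
  have key : ∀ lam : ℝ, (∃ v : Fin n → ℂ, v ≠ 0 ∧ (pathAdj n).mulVec v = (lam : ℂ) • v ∧
      v i0 ≠ 0 ∧ v i1 ≠ 0) →
      ∃ r : ℝ, r ≠ 0 ∧ Complex.exp (-(Complex.I * t) * lam) = E i1 i0 * r := by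
    rintro lam ⟨v, -, hv, hv0, hv1⟩
    obtain ⟨r, hr⟩ := path_eigvec_real hn lam v hv (n - 1) (by omega)
    have hrne : r ≠ 0 := by
      intro h
      rw [h] at hr
      simp only [Complex.ofReal_zero, zero_mul] at hr
      exact hv1 hr
    have hMv : M.mulVec v = (-(Complex.I * t) * lam) • v := by
      rw [hM, Matrix.smul_mulVec, hv, smul_smul]
    have hEv := exp_mulVec_eig M v _ hMv
    have hEsymm : E.IsSymm := by
      refine Matrix.IsSymm.exp ?_
      rw [hM, Matrix.IsSymm, Matrix.transpose_smul, (pathAdj_symm n)]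
    have hrow := congrFun hEv i0
    rw [Matrix.mulVec, dotProduct] at hrow
    have hsum : ∑ k : Fin n, E i0 k * v k = E i1 i0 * v i1 := by
      rw [Finset.sum_eq_single i1]
      · congr 1
        exact hEsymm.apply i1 i0
      · intro j _ hj
        rw [hEsymm.apply j i0, hcol j hj, zero_mul]
      · simp
    rw [hsum] at hrow
    refine ⟨r, hrne, ?_⟩
    have hveq : v i1 = (r : ℂ) * v i0 := hr
    rw [hveq] at hrow
    simp only [Pi.smul_apply, smul_eq_mul] at hrow
    have h9 : Complex.exp (-(Complex.I * t) * lam) * v i0 = (E i1 i0 * r) * v i0 := by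
      linear_combination -hrow
    exact mul_right_cancel₀ hv0 h9
  -- phase differences are integer multiples of π
  have pair : ∀ a b : ℝ,
      (∃ v : Fin n → ℂ, v ≠ 0 ∧ (pathAdj n).mulVec v = (a : ℂ) • v ∧
        v i0 ≠ 0 ∧ v i1 ≠ 0) →
      (∃ v : Fin n → ℂ, v ≠ 0 ∧ (pathAdj n).mulVec v = (b : ℂ) • v ∧
        v i0 ≠ 0 ∧ v i1 ≠ 0) →
      ∃ m : ℤ, t * (a - b) = m * Real.pi := by
    intro a b ha hb
    obtain ⟨ra, hra0, hra⟩ := key a ha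
    obtain ⟨rb, hrb0, hrb⟩ := key b hb
    have hγ : E i1 i0 ≠ 0 := by
      intro h
      rw [h, zero_mul] at hrb
      exact Complex.exp_ne_zero _ hrb
    set x : ℝ := -(t * (a - b)) with hx
    have hz : ((x : ℂ) * Complex.I) = -(Complex.I * t) * a - -(Complex.I * t) * b := by
      rw [hx]; push_cast; ring
    have hdiv : Complex.exp ((x : ℂ) * Complex.I) = ((ra / rb : ℝ) : ℂ) := by
      rw [hz, Complex.exp_sub, hra, hrb, mul_div_mul_left _ _ hγ]
      push_cast
      ring
    have habs1 : |ra / rb| = 1 := by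
      have := Complex.norm_exp_ofReal_mul_I x
      rw [hdiv, Complex.norm_real] at this
      exact this
    have hsq : (ra / rb) ^ 2 = 1 := by
      have h7 := sq_abs (ra / rb)
      rw [habs1, one_pow] at h7
      linarith
    have hexp2 : Complex.exp ((x:ℂ) * Complex.I + (x:ℂ) * Complex.I) = 1 := by
      rw [Complex.exp_add, hdiv]
      have h8 : (ra / rb) * (ra / rb) = 1 := by rw [← sq]; exact hsq
      exact_mod_cast h8
    obtain ⟨m, hm⟩ := Complex.exp_eq_one_iff.mp hexp2
    have hc : ((2 * x : ℝ) : ℂ) * Complex.I = ((2 * Real.pi * m : ℝ) : ℂ) * Complex.I := by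
      push_cast
      linear_combination hm
    have hr2 : (2 * x : ℝ) = 2 * Real.pi * m := by
      have h9 := mul_right_cancel₀ Complex.I_ne_zero hc
      exact_mod_cast h9
    rw [hx] at hr2
    refine ⟨-m, ?_⟩
    push_cast
    linarith
  obtain ⟨k, hk⟩ := pair lam₁ lam₂ h₁ h₂
  obtain ⟨m, hm⟩ := pair lam₃ lam₄ h₃ h₄
  have hsub : lam₃ - lam₄ ≠ 0 := sub_ne_zero.2 hne
  have hm0 : (m : ℝ) ≠ 0 := by
    intro h
    rw [h, zero_mul] at hm
    rcases mul_eq_zero.mp hm with h' | h'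
    · exact absurd h' (ne_of_gt ht)
    · exact hsub h'
  refine ⟨(k : ℚ) / (m : ℚ), ?_⟩
  push_cast
  rw [div_eq_div_iff hsub hm0]
  have h5 : t * ((lam₁ - lam₂) * m - (lam₃ - lam₄) * k) = 0 := by
    linear_combination (m : ℝ) * hk - (k : ℝ) * hm
  have h6 := (mul_eq_zero.mp h5).resolve_left (ne_of_gt ht)
  linarith
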